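/- Assume (A1), (D1) and (D2). Then the rescaled layered stable Lévy measures h·(T_{h^{-1/α}}ν) converge vaguely, as h → 0⁺, to the α-stable Lévy measure ν^α_{σ₁}: for every bounded continuous function f : ℝ^d → ℝ that vanishes on a neighborhood of the origin, lim_{h→0⁺} h ∫_{S^{d-1}} ∫_0^∞ f(h^{-1/α} r ξ) q(r,ξ) dr σ(dξ) = ∫_{S^{d-1}} c₁(ξ) ∫_0^∞ f(rξ) r^{-α-1} dr σ(dξ). (Convergence of Lévy measures in the proof of Theorem 3.1 on the short time behavior of layered stable processes.) -/

import Mathlib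

open MeasureTheory Set Filter

/-- Convergence of Lévy measures in the proof of Theorem 3.1 (short time behavior):
under (A1), (D1), (D2), the rescaled layered stable Lévy measures
`h · T_{h^{-1/α}} ν` converge vaguely, as `h → 0⁺`, to the `α`-stable Lévy measure
`ν^α_{σ₁}`. -/
theorem layered_stable_short_time_levy_measure_convergence
    (d : ℕ) (hd : 1 ≤ d)
    (σ : Measure (Metric.sphere (0 : EuclideanSpace ℝ (Fin d)) 1))
    [IsFiniteMeasure σ]
    (α β : ℝ) (hα0 : 0 < α) (hα2 : α < 2) (hβ : 0 < β)
    (q : ℝ → Metric.sphere (0 : EuclideanSpace ℝ (Fin d)) 1 → ℝ)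
    (hq_meas : Measurable (Function.uncurry q))
    (hq_pos : ∀ r : ℝ, 0 < r → ∀ ξ, 0 < q r ξ)
    (c₁ C₁ C₂ : Metric.sphere (0 : EuclideanSpace ℝ (Fin d)) 1 → ℝ)
    (hc₁_nonneg : ∀ ξ, 0 ≤ c₁ ξ) (hc₁_int : Integrable c₁ σ)
    (hA1 : ∀ ξ, Tendsto (fun r : ℝ => r ^ (α + 1) * q r ξ)
      (nhdsWithin 0 (Ioi 0)) (nhds (c₁ ξ)))
    (hC₁_nonneg : ∀ ξ, 0 ≤ C₁ ξ) (hC₁_int : Integrable C₁ σ)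
    (hD1 : ∀ ξ, ∀ r : ℝ, 0 < r → r ≤ 1 → q r ξ ≤ C₁ ξ * r ^ (-α - 1))
    (hC₂_nonneg : ∀ ξ, 0 ≤ C₂ ξ) (hC₂_int : Integrable C₂ σ)
    (hD2 : ∀ ξ, ∀ r : ℝ, 1 ≤ r → q r ξ ≤ C₂ ξ * r ^ (-β - 1))
    (f : EuclideanSpace ℝ (Fin d) → ℝ)
    (hf_cont : Continuous f)
    (hf_bdd : ∃ C : ℝ, ∀ x, |f x| ≤ C)
    (hf_van : ∃ ε : ℝ, 0 < ε ∧ ∀ x : EuclideanSpace ℝ (Fin d), ‖x‖ ≤ ε → f x = 0) :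
    Tendsto
      (fun h : ℝ => h * ∫ ξ, (∫ r in Ioi (0 : ℝ),
        f ((h ^ (-(1 / α)) * r) • (ξ : EuclideanSpace ℝ (Fin d))) * q r ξ) ∂σ)
      (nhdsWithin 0 (Ioi 0))
      (nhds (∫ ξ, c₁ ξ * (∫ r in Ioi (0 : ℝ),
        f (r • (ξ : EuclideanSpace ℝ (Fin d))) * r ^ (-α - 1)) ∂σ)) := by
  obtain ⟨C, hC⟩ := hf_bdd
  obtain ⟨ε, hε, hvan⟩ := hf_van
  have hαne : α ≠ 0 := ne_of_gt hα0
  have hC0 : (0:ℝ) ≤ C := le_trans (abs_nonneg _) (hC 0)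
  have hu_pos : ∀ h : ℝ, 0 < h → (0:ℝ) < h ^ (1/α) :=
    fun h hh => Real.rpow_pos_of_pos hh _
  -- κ identity : h * h^(1/α) = (h^(1/α))^(α+1)
  have hκ_eq : ∀ h : ℝ, 0 < h → h * h ^ (1/α) = (h ^ (1/α)) ^ (α+1) := by
    intro h hh
    rw [← Real.rpow_mul hh.le, show (1/α) * (α+1) = 1 + 1/α by field_simp,
      Real.rpow_add hh, Real.rpow_one]
  -- norm of points s • ξ
  have hnorm : ∀ (ξ : Metric.sphere (0 : EuclideanSpace ℝ (Fin d)) 1) (s : ℝ), 0 ≤ s →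
      ‖s • (ξ : EuclideanSpace ℝ (Fin d))‖ = s := by
    intro ξ s hs
    rw [norm_smul, Real.norm_eq_abs, abs_of_nonneg hs,
      mem_sphere_zero_iff_norm.mp ξ.2, mul_one]
  -- the base dominating function
  set B₀ : ℝ → ℝ := Set.indicator (Ici ε) (fun t : ℝ => t ^ (-α-1) + t ^ (-β-1)) with hB₀
  have hB₀_nonneg : ∀ s, 0 ≤ B₀ s := by
    intro s
    apply Set.indicator_nonneg
    intro t ht
    have h0t : (0:ℝ) < t := lt_of_lt_of_le hε ht
    positivity
  have hB₀_int : Integrable B₀ (volume.restrict (Ioi (0:ℝ))) := by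
    have h1 : IntegrableOn (fun t : ℝ => t ^ (-α-1) + t ^ (-β-1)) (Ioi ε) :=
      (integrableOn_Ioi_rpow_of_lt (by linarith) hε).add
        (integrableOn_Ioi_rpow_of_lt (by linarith) hε)
    have h2 : IntegrableOn (fun t : ℝ => t ^ (-α-1) + t ^ (-β-1)) (Ici ε) :=
      Iff.mpr integrableOn_Ici_iff_integrableOn_Ioi h1
    exact (h2.integrable_indicator measurableSet_Ici).integrableOn
  set D : ℝ := ∫ s in Ioi (0:ℝ), B₀ s with hD
  -- the dominating function per ξ
  have hBnd_int : ∀ ξ, Integrable (fun s => C * (C₁ ξ + C₂ ξ) * B₀ s)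
      (volume.restrict (Ioi (0:ℝ))) := fun ξ => hB₀_int.const_mul _
  have hBnd_integral : ∀ ξ, (∫ s in Ioi (0:ℝ), C * (C₁ ξ + C₂ ξ) * B₀ s)
      = C * (C₁ ξ + C₂ ξ) * D := fun ξ => integral_const_mul _ _
  -- the key uniform bound
  have key_bound : ∀ h : ℝ, h ∈ Ioo (0:ℝ) 1 →
      ∀ ξ : Metric.sphere (0 : EuclideanSpace ℝ (Fin d)) 1, ∀ s : ℝ, s ∈ Ioi (0:ℝ) →
      ‖f (s • (ξ : EuclideanSpace ℝ (Fin d))) * ((h * h ^ (1/α)) * q (h ^ (1/α) * s) ξ)‖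
        ≤ C * (C₁ ξ + C₂ ξ) * B₀ s := by
    intro h hh ξ s hs
    obtain ⟨hh0, hh1⟩ := hh
    have hs0 : (0:ℝ) < s := hs
    have hv0 : (0:ℝ) < h ^ (1/α) := hu_pos h hh0
    have hr0 : (0:ℝ) < h ^ (1/α) * s := mul_pos hv0 hs0
    by_cases hsε : ε ≤ s
    · have hBs : B₀ s = s ^ (-α-1) + s ^ (-β-1) :=
        Set.indicator_of_mem (Set.mem_Ici.mpr hsε) _
      rw [hBs]
      have hq0 : 0 < q (h ^ (1/α) * s) ξ := hq_pos _ hr0 ξ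
      have hκq : (h * h ^ (1/α)) * q (h ^ (1/α) * s) ξ
          ≤ (C₁ ξ + C₂ ξ) * (s ^ (-α-1) + s ^ (-β-1)) := by
        have hκ0 : (0:ℝ) < h * h ^ (1/α) := mul_pos hh0 hv0
        have hs1 : (0:ℝ) ≤ s ^ (-α-1) := Real.rpow_nonneg hs0.le _
        have hs2 : (0:ℝ) ≤ s ^ (-β-1) := Real.rpow_nonneg hs0.le _
        rcases le_or_gt (h ^ (1/α) * s) 1 with h1 | h1
        · -- small r : use (D1)
          have hq1 := hD1 ξ _ hr0 h1
          have e1 : (h ^ (1/α) * s) ^ (-α-1) = (h ^ (1/α)) ^ (-α-1) * s ^ (-α-1) :=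
            Real.mul_rpow hv0.le hs0.le
          have e2 : (h * h ^ (1/α)) * (h ^ (1/α)) ^ (-α-1) = 1 := by
            rw [hκ_eq h hh0, ← Real.rpow_add hv0, show α + 1 + (-α-1) = 0 by ring,
              Real.rpow_zero]
          calc (h * h ^ (1/α)) * q (h ^ (1/α) * s) ξ
              ≤ (h * h ^ (1/α)) * (C₁ ξ * ((h ^ (1/α)) ^ (-α-1) * s ^ (-α-1))) := by
                rw [← e1]; exact mul_le_mul_of_nonneg_left hq1 hκ0.le
            _ = ((h * h ^ (1/α)) * (h ^ (1/α)) ^ (-α-1)) * (C₁ ξ * s ^ (-α-1)) := by ring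
            _ = C₁ ξ * s ^ (-α-1) := by rw [e2, one_mul]
            _ ≤ (C₁ ξ + C₂ ξ) * (s ^ (-α-1) + s ^ (-β-1)) := by
                nlinarith [hC₁_nonneg ξ, hC₂_nonneg ξ]
        · -- large r : use (D2)
          have hq2 := hD2 ξ _ h1.le
          have e1 : (h ^ (1/α) * s) ^ (-β-1) = (h ^ (1/α)) ^ (-β-1) * s ^ (-β-1) :=
            Real.mul_rpow hv0.le hs0.le
          have e2 : (h * h ^ (1/α)) * (h ^ (1/α)) ^ (-β-1) = (h ^ (1/α)) ^ (α-β) := by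
            rw [hκ_eq h hh0, ← Real.rpow_add hv0, show α + 1 + (-β-1) = α - β by ring]
          have e3 : (h ^ (1/α)) ^ (α-β) * s ^ (-β-1) ≤ s ^ (-α-1) + s ^ (-β-1) := by
            rcases le_or_gt β α with hba | hba
            · have hv1 : h ^ (1/α) ≤ 1 :=
                Real.rpow_le_one hh0.le hh1.le (by positivity)
              have hle1 : (h ^ (1/α)) ^ (α-β) ≤ 1 :=
                Real.rpow_le_one hv0.le hv1 (by linarith)
              nlinarith
            · have hvs : s⁻¹ ≤ h ^ (1/α) := by
                rw [inv_eq_one_div, div_le_iff₀ hs0]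
                linarith
              have h4 : (h ^ (1/α)) ^ (α-β) ≤ (s⁻¹) ^ (α-β) :=
                Real.rpow_le_rpow_of_nonpos (inv_pos.mpr hs0) hvs (by linarith)
              have h5 : (s⁻¹ : ℝ) ^ (α-β) = s ^ (β-α) := by
                rw [Real.inv_rpow hs0.le, ← Real.rpow_neg hs0.le,
                  show -(α-β) = β-α by ring]
              have h6 : s ^ (β-α) * s ^ (-β-1) = s ^ (-α-1) := by
                rw [← Real.rpow_add hs0, show β-α + (-β-1) = -α-1 by ring]
              have h7 : (h ^ (1/α)) ^ (α-β) * s ^ (-β-1) ≤ s ^ (β-α) * s ^ (-β-1) :=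
                mul_le_mul_of_nonneg_right (h5 ▸ h4) hs2
              rw [h6] at h7
              linarith
          calc (h * h ^ (1/α)) * q (h ^ (1/α) * s) ξ
              ≤ (h * h ^ (1/α)) * (C₂ ξ * ((h ^ (1/α)) ^ (-β-1) * s ^ (-β-1))) := by
                rw [← e1]; exact mul_le_mul_of_nonneg_left hq2 hκ0.le
            _ = C₂ ξ * (((h * h ^ (1/α)) * (h ^ (1/α)) ^ (-β-1)) * s ^ (-β-1)) := by ring
            _ = C₂ ξ * ((h ^ (1/α)) ^ (α-β) * s ^ (-β-1)) := by rw [e2]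
            _ ≤ C₂ ξ * (s ^ (-α-1) + s ^ (-β-1)) :=
                mul_le_mul_of_nonneg_left e3 (hC₂_nonneg ξ)
            _ ≤ (C₁ ξ + C₂ ξ) * (s ^ (-α-1) + s ^ (-β-1)) := by
                nlinarith [hC₁_nonneg ξ, hC₂_nonneg ξ]
      rw [Real.norm_eq_abs, abs_mul]
      have habs : |(h * h ^ (1/α)) * q (h ^ (1/α) * s) ξ|
          = (h * h ^ (1/α)) * q (h ^ (1/α) * s) ξ :=
        abs_of_pos (mul_pos (mul_pos hh0 hv0) hq0)
      rw [habs]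
      calc |f (s • (ξ : EuclideanSpace ℝ (Fin d)))| * ((h * h ^ (1/α)) * q (h ^ (1/α) * s) ξ)
          ≤ C * ((C₁ ξ + C₂ ξ) * (s ^ (-α-1) + s ^ (-β-1))) :=
            mul_le_mul (hC _) hκq (by positivity) hC0
        _ = C * (C₁ ξ + C₂ ξ) * (s ^ (-α-1) + s ^ (-β-1)) := by ring
    · -- s < ε : f vanishes
      have hf0 : f (s • (ξ : EuclideanSpace ℝ (Fin d))) = 0 := by
        apply hvan
        rw [hnorm ξ s hs0.le]
        linarith [lt_of_not_ge hsε]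
      rw [hf0, zero_mul, norm_zero]
      have hB := hB₀_nonneg s
      have h1 : 0 ≤ C * (C₁ ξ + C₂ ξ) := by
        have := hC₁_nonneg ξ; have := hC₂_nonneg ξ; positivity
      positivity
  -- inner measurability (fixed ξ, fixed h)
  have hmeas_inner : ∀ (ξ : Metric.sphere (0 : EuclideanSpace ℝ (Fin d)) 1) (h : ℝ),
      AEStronglyMeasurable
        (fun s : ℝ => f (s • (ξ : EuclideanSpace ℝ (Fin d)))
          * ((h * h ^ (1/α)) * q (h ^ (1/α) * s) ξ))
        (volume.restrict (Ioi (0:ℝ))) := by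
    intro ξ h
    apply Measurable.aestronglyMeasurable
    refine Measurable.mul ?_ (measurable_const.mul ?_)
    · exact (hf_cont.comp (continuous_id.smul continuous_const)).measurable
    · exact hq_meas.comp ((measurable_id.const_mul _).prodMk measurable_const)
  -- pointwise limit of the rescaled density
  have hpt : ∀ (ξ : Metric.sphere (0 : EuclideanSpace ℝ (Fin d)) 1) (s : ℝ), 0 < s →
      Tendsto (fun h : ℝ => (h * h ^ (1/α)) * q (h ^ (1/α) * s) ξ)
        (nhdsWithin 0 (Ioi 0)) (nhds (c₁ ξ * s ^ (-α-1))) := by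
    intro ξ s hs
    have hmap : Tendsto (fun h : ℝ => h ^ (1/α) * s)
        (nhdsWithin (0:ℝ) (Ioi 0)) (nhdsWithin (0:ℝ) (Ioi 0)) := by
      rw [tendsto_nhdsWithin_iff]
      constructor
      · have h1 : Tendsto (fun h : ℝ => h ^ (1/α)) (nhdsWithin (0:ℝ) (Ioi 0)) (nhds 0) := by
          have h2 := (Real.continuousAt_rpow_const 0 (1/α)
            (Or.inr (by positivity))).tendsto
          rw [Real.zero_rpow (by positivity : (1/α : ℝ) ≠ 0)] at h2
          exact h2.mono_left nhdsWithin_le_nhds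
        have h3 := h1.mul_const s
        rwa [zero_mul] at h3
      · filter_upwards [self_mem_nhdsWithin] with h hh
        exact mul_pos (hu_pos h hh) hs
    have h2 := ((hA1 ξ).comp hmap).mul_const (s ^ (-α-1))
    refine Tendsto.congr' ?_ h2
    filter_upwards [self_mem_nhdsWithin] with h hh
    have hh0 : (0:ℝ) < h := hh
    have hv0 := hu_pos h hh0
    have e1 : (h ^ (1/α) * s) ^ (α+1) = (h * h ^ (1/α)) * s ^ (α+1) := by
      rw [Real.mul_rpow hv0.le hs.le, hκ_eq h hh0]
    have e2 : s ^ (α+1) * s ^ (-α-1) = 1 := by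
      rw [← Real.rpow_add hs, show α+1 + (-α-1) = 0 by ring, Real.rpow_zero]
    show ((h ^ (1/α) * s) ^ (α+1) * q (h ^ (1/α) * s) ξ) * s ^ (-α-1) = _
    calc ((h ^ (1/α) * s) ^ (α+1) * q (h ^ (1/α) * s) ξ) * s ^ (-α-1)
        = ((h * h ^ (1/α)) * q (h ^ (1/α) * s) ξ) * (s ^ (α+1) * s ^ (-α-1)) := by
          rw [e1]; ring
      _ = (h * h ^ (1/α)) * q (h ^ (1/α) * s) ξ := by rw [e2, mul_one]
  -- inner dominated convergence
  have inner_tendsto : ∀ ξ : Metric.sphere (0 : EuclideanSpace ℝ (Fin d)) 1,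
      Tendsto (fun h : ℝ => ∫ s in Ioi (0:ℝ),
          f (s • (ξ : EuclideanSpace ℝ (Fin d))) * ((h * h ^ (1/α)) * q (h ^ (1/α) * s) ξ))
        (nhdsWithin 0 (Ioi 0))
        (nhds (c₁ ξ * ∫ r in Ioi (0:ℝ),
          f (r • (ξ : EuclideanSpace ℝ (Fin d))) * r ^ (-α-1))) := by
    intro ξ
    have hlim := tendsto_integral_filter_of_dominated_convergence
      (μ := volume.restrict (Ioi (0:ℝ)))
      (F := fun (h : ℝ) (s : ℝ) => f (s • (ξ : EuclideanSpace ℝ (Fin d)))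
        * ((h * h ^ (1/α)) * q (h ^ (1/α) * s) ξ))
      (f := fun s : ℝ => f (s • (ξ : EuclideanSpace ℝ (Fin d))) * (c₁ ξ * s ^ (-α-1)))
      (fun s => C * (C₁ ξ + C₂ ξ) * B₀ s)
      (Eventually.of_forall fun h => hmeas_inner ξ h)
      (by filter_upwards [Ioo_mem_nhdsGT_of_mem (left_mem_Ico.mpr one_pos)] with h hh
          exact (ae_restrict_iff' measurableSet_Ioi).mpr
            (ae_of_all _ fun s hs => key_bound h hh ξ s hs))
      (hBnd_int ξ)
      ((ae_restrict_iff' measurableSet_Ioi).mpr (ae_of_all _ fun s hs =>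
        Tendsto.const_mul _ (hpt ξ s hs)))
    have e : (∫ s in Ioi (0:ℝ),
        f (s • (ξ : EuclideanSpace ℝ (Fin d))) * (c₁ ξ * s ^ (-α-1)))
        = c₁ ξ * ∫ r in Ioi (0:ℝ),
          f (r • (ξ : EuclideanSpace ℝ (Fin d))) * r ^ (-α-1) := by
      rw [← integral_const_mul]
      exact integral_congr_ae (Eventually.of_forall fun s => by ring)
    rwa [e] at hlim
  -- outer measurability
  have hmeas_outer : ∀ h : ℝ, AEStronglyMeasurable
      (fun ξ : Metric.sphere (0 : EuclideanSpace ℝ (Fin d)) 1 => ∫ s in Ioi (0:ℝ),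
        f (s • (ξ : EuclideanSpace ℝ (Fin d))) * ((h * h ^ (1/α)) * q (h ^ (1/α) * s) ξ)) σ := by
    intro h
    have hm : StronglyMeasurable (Function.uncurry
        fun (ξ : Metric.sphere (0 : EuclideanSpace ℝ (Fin d)) 1) (s : ℝ) =>
          f (s • (ξ : EuclideanSpace ℝ (Fin d))) * ((h * h ^ (1/α)) * q (h ^ (1/α) * s) ξ)) := by
      apply Measurable.stronglyMeasurable
      refine Measurable.mul ?_ (measurable_const.mul ?_)
      · exact (hf_cont.comp (continuous_snd.smul
          (continuous_subtype_val.comp continuous_fst))).measurable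
      · exact hq_meas.comp ((measurable_snd.const_mul _).prodMk measurable_fst)
    exact hm.integral_prod_right.aestronglyMeasurable
  -- outer dominated convergence
  have outer : Tendsto (fun h : ℝ => ∫ ξ, (∫ s in Ioi (0:ℝ),
        f (s • (ξ : EuclideanSpace ℝ (Fin d))) * ((h * h ^ (1/α)) * q (h ^ (1/α) * s) ξ)) ∂σ)
      (nhdsWithin 0 (Ioi 0))
      (nhds (∫ ξ, c₁ ξ * (∫ r in Ioi (0:ℝ),
        f (r • (ξ : EuclideanSpace ℝ (Fin d))) * r ^ (-α-1)) ∂σ)) := by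
    apply tendsto_integral_filter_of_dominated_convergence
      (fun ξ => C * (C₁ ξ + C₂ ξ) * D)
      (Eventually.of_forall hmeas_outer)
      ?_
      (((hC₁_int.add hC₂_int).const_mul C).mul_const D)
      (ae_of_all _ inner_tendsto)
    filter_upwards [Ioo_mem_nhdsGT_of_mem (left_mem_Ico.mpr one_pos)] with h hh
    refine ae_of_all _ fun ξ => ?_
    rw [← hBnd_integral ξ]
    exact norm_integral_le_of_norm_le (hBnd_int ξ)
      ((ae_restrict_iff' measurableSet_Ioi).mpr
        (ae_of_all _ fun s hs => key_bound h hh ξ s hs))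
  -- change of variables identifies the two expressions for h > 0
  refine Tendsto.congr' ?_ outer
  filter_upwards [self_mem_nhdsWithin] with h hh
  have hh0 : (0:ℝ) < h := hh
  have hv0 := hu_pos h hh0
  rw [← integral_const_mul]
  refine integral_congr_ae (ae_of_all _ fun ξ => ?_)
  have cov := integral_comp_mul_left_Ioi
    (fun r => f ((h ^ (-(1/α)) * r) • (ξ : EuclideanSpace ℝ (Fin d))) * q r ξ) 0 hv0
  rw [mul_zero] at cov
  have hinv : ∀ x : ℝ, h ^ (-(1/α)) * (h ^ (1/α) * x) = x := by
    intro x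
    rw [Real.rpow_neg hh0.le, ← mul_assoc, inv_mul_cancel₀ hv0.ne', one_mul]
  simp only [hinv, smul_eq_mul] at cov
  calc (∫ s in Ioi (0:ℝ),
        f (s • (ξ : EuclideanSpace ℝ (Fin d))) * ((h * h ^ (1/α)) * q (h ^ (1/α) * s) ξ))
      = (h * h ^ (1/α)) * ∫ s in Ioi (0:ℝ),
          f (s • (ξ : EuclideanSpace ℝ (Fin d))) * q (h ^ (1/α) * s) ξ := by
        rw [← integral_const_mul]
        exact integral_congr_ae (Eventually.of_forall fun s => by ring)
    _ = h * ((h ^ (1/α)) * ((h ^ (1/α))⁻¹ * ∫ r in Ioi (0:ℝ),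
          f ((h ^ (-(1/α)) * r) • (ξ : EuclideanSpace ℝ (Fin d))) * q r ξ)) := by
        rw [← cov]; ring
    _ = h * ∫ r in Ioi (0:ℝ),
          f ((h ^ (-(1/α)) * r) • (ξ : EuclideanSpace ℝ (Fin d))) * q r ξ := by
        rw [mul_inv_cancel_left₀ hv0.ne']
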